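/- Let L_n be the set of labeled rooted plane trees on n+1 vertices with root labeled 0 and leftmost child of the root labeled 1, and let L'_n ⊆ L_n consist of those trees where the vertex labeled 2 lies in the subtree rooted at the vertex labeled 1. Then for n ≥ 2, |L'_n| = |L_n|/2 = (1/2)(n-1)!·C_n. -/

import Mathlib

/-- A labeled rooted plane tree: a root label together with a linearly ordered list of
subtrees. -/
inductive PTree : Type where
  | node : ℕ → List PTree → PTree

/-- The label of the root of the tree. -/
def PTree.label : PTree → ℕ
  | .node a _ => a

/-- The ordered list of children of the root. -/
def PTree.children : PTree → List PTree
  | .node _ ts => ts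

mutual
/-- The list of all labels occurring in the tree. -/
def PTree.labels : PTree → List ℕ
  | .node a ts => a :: labelsList ts
/-- The list of all labels occurring in a forest. -/
def labelsList : List PTree → List ℕ
  | [] => []
  | t :: ts => t.labels ++ labelsList ts
end

/-- `T` is a member of `Lₙ`: a labeled rooted plane tree with `n+1` vertices labeled
bijectively by `{0,…,n}`, whose root is labeled `0` and whose leftmost root-child is
labeled `1`. -/
def InL (n : ℕ) (T : PTree) : Prop :=
  T.labels.Nodup ∧ (∀ k : ℕ, k ∈ T.labels ↔ k ≤ n) ∧ T.label = 0 ∧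
    ∃ t ts, T = .node 0 (t :: ts) ∧ t.label = 1

/-- `T` is a member of `L'ₙ ⊆ Lₙ`: additionally, the vertex labeled `2` lies in the
subtree rooted at the vertex labeled `1` (the leftmost child of the root). -/
def InL' (n : ℕ) (T : PTree) : Prop :=
  InL n T ∧ ∃ t ts, T = .node 0 (t :: ts) ∧ 2 ∈ t.labels


/-! ### Auxiliary machinery -/

/-- The binary-tree shape of a forest (rotation correspondence). -/
def shapeF : List PTree → Tree Unit
  | [] => .nil
  | .node _ cs :: ts => .node () (shapeF cs) (shapeF ts)

/-- Rebuild a forest from a binary tree shape and a preorder list of labels;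
returns the forest together with the unused labels. -/
def buildF : Tree Unit → List ℕ → List PTree × List ℕ
  | .nil, ls => ([], ls)
  | .node _ L R, ls =>
    let p := buildF L ls.tail
    let q := buildF R p.2
    (.node ls.headI p.1 :: q.1, q.2)

theorem numNodes_shapeF : ∀ F : List PTree, (shapeF F).numNodes = (labelsList F).length := by
  intro F
  induction F using shapeF.induct with
  | case1 => simp [shapeF, labelsList]
  | case2 a cs ts ih1 ih2 =>
    simp [shapeF, labelsList, PTree.labels, Tree.numNodes, ih1, ih2]

theorem buildF_shapeF : ∀ (F : List PTree) (rest : List ℕ),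
    buildF (shapeF F) (labelsList F ++ rest) = (F, rest) := by
  intro F
  induction F using shapeF.induct with
  | case1 => intro rest; simp [shapeF, labelsList, buildF]
  | case2 a cs ts ih1 ih2 =>
    intro rest
    simp [shapeF, labelsList, PTree.labels, buildF, List.append_assoc, ih1, ih2]

theorem buildF_recover (l : List PTree) : buildF (shapeF l) (labelsList l) = (l, []) := by
  simpa using buildF_shapeF l []

theorem buildF_spec : ∀ (b : Tree Unit) (ls : List ℕ), b.numNodes ≤ ls.length →
    labelsList (buildF b ls).1 = ls.take b.numNodes ∧ (buildF b ls).2 = ls.drop b.numNodes ∧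
      shapeF (buildF b ls).1 = b := by
  intro b
  induction b with
  | nil => intro ls _; simp [buildF, labelsList, shapeF]
  | node _ L R ihL ihR =>
    intro ls hlen
    simp only [Tree.numNodes, BinaryTree.numNodes] at hlen ihL ihR ⊢
    obtain ⟨x, ls', rfl⟩ : ∃ x ls', ls = x :: ls' := by
      cases ls with
      | nil => simp at hlen
      | cons x ls' => exact ⟨x, ls', rfl⟩
    simp only [List.length_cons] at hlen
    obtain ⟨h1, h2, h3⟩ := ihL ls' (by omega)
    obtain ⟨h4, h5, h6⟩ := ihR (ls'.drop L.numNodes) (by simp; omega)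
    simp only [buildF, List.tail_cons, List.headI, h2]
    refine ⟨?_, ?_, ?_⟩
    · simp only [labelsList, PTree.labels, h1, h4, List.take_succ_cons, List.cons_append]
      rw [List.take_add]
    · simp [h5, List.drop_drop]
    · simp [shapeF, h3, h6, h2]

theorem buildF_node (u : Unit) (L R : Tree Unit) (ls : List ℕ) :
    buildF (Tree.node u L R) ls =
      (.node ls.headI (buildF L ls.tail).1 :: (buildF R (buildF L ls.tail).2).1,
       (buildF R (buildF L ls.tail).2).2) := rfl

/-- Encoding of a labeled tree as (free labels in preorder, binary shape of the root forest). -/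
def gmap : PTree → List ℕ × Tree Unit
  | .node _ l => ((labelsList l).tail, shapeF l)

theorem InL_struct {n : ℕ} {T : PTree} (h : InL n T) :
    ∃ cs ts, T = .node 0 (.node 1 cs :: ts) := by
  obtain ⟨-, -, -, t, ts, rfl, ht⟩ := h
  cases t with
  | node b cs =>
    simp only [PTree.label] at ht
    exact ⟨cs, ts, by rw [ht]⟩

theorem labels_node (cs ts : List PTree) :
    (PTree.node 0 (.node 1 cs :: ts)).labels = 0 :: 1 :: (labelsList cs ++ labelsList ts) := by
  simp [PTree.labels, labelsList]

/-- Swap the children of vertex `1` with the remaining children of the root. -/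
def pswap : PTree → PTree
  | .node a (.node b cs :: ts) => .node a (.node b ts :: cs)
  | T => T

theorem pswap_node (a b : ℕ) (cs ts : List PTree) :
    pswap (.node a (.node b cs :: ts)) = .node a (.node b ts :: cs) := rfl

theorem InL'_iff {n : ℕ} (cs ts : List PTree) (h : InL n (.node 0 (.node 1 cs :: ts))) :
    InL' n (.node 0 (.node 1 cs :: ts)) ↔ 2 ∈ labelsList cs := by
  constructor
  · rintro ⟨-, t', ts', hEq, h2⟩
    rw [PTree.node.injEq] at hEq
    obtain ⟨-, hEq⟩ := hEq
    rw [List.cons.injEq] at hEq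
    rw [← hEq.1] at h2
    simp only [PTree.labels, List.mem_cons] at h2
    rcases h2 with h2 | h2
    · omega
    · exact h2
  · intro h2
    exact ⟨h, .node 1 cs, ts, rfl, by simp [PTree.labels, h2]⟩

theorem InL_pswap {n : ℕ} (cs ts : List PTree) (h : InL n (.node 0 (.node 1 cs :: ts))) :
    InL n (.node 0 (.node 1 ts :: cs)) := by
  obtain ⟨hnd, hmem, -, -⟩ := h
  rw [labels_node] at hnd hmem
  have hp : (0 :: 1 :: (labelsList ts ++ labelsList cs)).Perm
      (0 :: 1 :: (labelsList cs ++ labelsList ts)) :=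
    ((List.perm_append_comm).cons 1).cons 0
  refine ⟨?_, ?_, rfl, .node 1 ts, cs, rfl, rfl⟩
  · rw [labels_node]
    exact hp.nodup_iff.mpr hnd
  · intro k
    rw [labels_node]
    exact (hp.mem_iff).trans (hmem k)

/-- The key cardinality computation: `Lₙ` is finite of cardinality `(n-1)! Cₙ`. -/
theorem card_L (n : ℕ) (hn : 2 ≤ n) :
    {T : PTree | InL n T}.Finite ∧
      {T : PTree | InL n T}.ncard = Nat.factorial (n - 1) * catalan n := by
  classical
  set l0 : List ℕ := List.range' 2 (n - 1) with hl0def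
  have hl0nd : l0.Nodup := List.nodup_range' (s := 2) (n := n - 1)
  have hl0mem : ∀ k, k ∈ l0 ↔ 2 ≤ k ∧ k ≤ n := by
    intro k
    rw [hl0def, List.mem_range'_1]
    omega
  have hl0len : l0.length = n - 1 := List.length_range' (s := 2) (step := 1) (n := n - 1)
  set A : Set (List ℕ × Tree Unit) := {p | p.1.Perm l0 ∧ p.2.numNodes = n} with hAdef
  have hAfin : A = ↑(l0.permutations.toFinset ×ˢ Tree.treesOfNumNodesEq n) := by
    ext p
    simp [hAdef, Finset.mem_product, List.mem_permutations, BinaryTree.mem_treesOfNumNodesEq]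
  have hAcard : A.ncard = Nat.factorial (n - 1) * catalan n := by
    rw [hAfin, Set.ncard_coe_finset, Finset.card_product,
      List.toFinset_card_of_nodup (List.nodup_permutations _ hl0nd),
      List.length_permutations, hl0len, BinaryTree.treesOfNumNodesEq_card_eq_catalan]
  -- facts about elements of L
  have hstruct : ∀ T, InL n T → ∃ cs ts, T = .node 0 (.node 1 cs :: ts) ∧
      labelsList (PTree.node 1 cs :: ts) = 1 :: (labelsList cs ++ labelsList ts) ∧
      gmap T = (labelsList cs ++ labelsList ts, shapeF (PTree.node 1 cs :: ts)) := by
    intro T hT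
    obtain ⟨cs, ts, rfl⟩ := InL_struct hT
    refine ⟨cs, ts, rfl, by simp [labelsList, PTree.labels], ?_⟩
    simp [gmap, labelsList, PTree.labels]
  -- injectivity
  have hinj : Set.InjOn gmap {T : PTree | InL n T} := by
    rintro T1 h1 T2 h2 hEq
    obtain ⟨cs1, ts1, rfl, hl1, hg1⟩ := hstruct T1 h1
    obtain ⟨cs2, ts2, rfl, hl2, hg2⟩ := hstruct T2 h2
    rw [hg1, hg2, Prod.mk.injEq] at hEq
    have hll : labelsList (PTree.node 1 cs1 :: ts1) = labelsList (PTree.node 1 cs2 :: ts2) := by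
      rw [hl1, hl2, hEq.1]
    have := buildF_recover (PTree.node 1 cs1 :: ts1)
    rw [hll, hEq.2, buildF_recover] at this
    rw [Prod.mk.injEq] at this
    rw [this.1]
  -- image
  have himg : gmap '' {T : PTree | InL n T} = A := by
    ext p
    constructor
    · rintro ⟨T, hT, rfl⟩
      obtain ⟨cs, ts, rfl, hl, hg⟩ := hstruct T hT
      obtain ⟨hnd, hmem, -, -⟩ := hT
      rw [labels_node] at hnd hmem
      set m := labelsList cs ++ labelsList ts with hm
      have hmnd : m.Nodup ∧ (0 : ℕ) ∉ m ∧ (1 : ℕ) ∉ m := by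
        simp only [List.nodup_cons, List.mem_cons] at hnd
        exact ⟨hnd.2.2, fun h => hnd.1 (Or.inr h), fun h => hnd.2.1 h⟩
      have hmperm : m.Perm l0 := by
        rw [List.perm_ext_iff_of_nodup hmnd.1 hl0nd]
        intro k
        rw [hl0mem]
        constructor
        · intro hk
          have hk2 : k ≤ n := (hmem k).mp (by simp [hk])
          have : k ≠ 0 := fun h => hmnd.2.1 (h ▸ hk)
          have : k ≠ 1 := fun h => hmnd.2.2 (h ▸ hk)
          omega
        · intro hk
          have := (hmem k).mpr hk.2
          simp only [List.mem_cons] at this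
          rcases this with h | h | h
          · omega
          · omega
          · exact h
      rw [hg]
      refine ⟨hmperm, ?_⟩
      rw [numNodes_shapeF, hl, List.length_cons, List.length_append]
      have := hmperm.length_eq
      rw [hl0len] at this
      rw [hm] at this
      rw [List.length_append] at this
      omega
    · rintro ⟨hp1, hp2⟩
      obtain ⟨ls, b⟩ := p
      simp only at hp1 hp2
      have hlsnd : ls.Nodup := hp1.nodup_iff.mpr hl0nd
      have hlsmem : ∀ k, k ∈ ls ↔ 2 ≤ k ∧ k ≤ n := fun k => (hp1.mem_iff).trans (hl0mem k)
      have hlslen : ls.length = n - 1 := by rw [hp1.length_eq, hl0len]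
      obtain ⟨u, L, R, hb⟩ : ∃ u L R, b = Tree.node u L R := by
        cases b with
        | nil => simp [Tree.numNodes] at hp2; omega
        | node u L R => exact ⟨u, L, R, rfl⟩
      obtain ⟨hb1, hb2, hb3⟩ := buildF_spec b (1 :: ls) (by simp [hlslen, hp2]; omega)
      have htake : (1 :: ls).take b.numNodes = 1 :: ls :=
        List.take_of_length_le (by simp [hlslen, hp2]; omega)
      rw [htake] at hb1
      set F := (buildF b (1 :: ls)).1 with hF
      obtain ⟨cs', ts', hFeq⟩ : ∃ cs ts, F = PTree.node 1 cs :: ts := by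
        rw [hF, hb, buildF_node]
        exact ⟨_, _, rfl⟩
      refine ⟨PTree.node 0 F, ?_, ?_⟩
      · have hlabels : (PTree.node 0 F).labels = 0 :: 1 :: ls := by
          simp only [PTree.labels]
          rw [hb1]
        refine ⟨?_, ?_, rfl, ?_⟩
        · rw [hlabels]
          simp only [List.nodup_cons, List.mem_cons]
          refine ⟨?_, ?_, hlsnd⟩
          · rintro (h | h)
            · omega
            · have := (hlsmem 0).mp h; omega
          · intro h
            have := (hlsmem 1).mp h; omega
        · intro k
          rw [hlabels]
          simp only [List.mem_cons, hlsmem]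
          omega
        · exact ⟨PTree.node 1 cs', ts', by rw [hFeq], rfl⟩
      · simp only [gmap]
        rw [hb1]
        simp only [List.tail_cons]
        rw [hb3]
  have hAFinite : A.Finite := by
    rw [hAfin]; exact Finset.finite_toSet _
  have hfin : {T : PTree | InL n T}.Finite :=
    Set.Finite.of_finite_image (himg ▸ hAFinite) hinj
  refine ⟨hfin, ?_⟩
  rw [← Set.ncard_image_of_injOn hinj, himg, hAcard]

/-- `|L'ₙ| = |Lₙ|/2 = (1/2)(n-1)!·Cₙ` for `n ≥ 2`. -/
theorem card_L'_half (n : ℕ) (hn : 2 ≤ n) :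
    2 * Set.ncard {T : PTree | InL' n T} = Set.ncard {T : PTree | InL n T} ∧
    2 * Set.ncard {T : PTree | InL' n T} = Nat.factorial (n - 1) * catalan n := by
  classical
  obtain ⟨hfin, hcard⟩ := card_L n hn
  have hsub : {T : PTree | InL' n T} ⊆ {T : PTree | InL n T} := fun T hT => hT.1
  -- pswap maps L' bijectively onto L \ L'
  have key : ∀ T, InL n T → InL n (pswap T) ∧ pswap (pswap T) = T ∧
      (InL' n (pswap T) ↔ ¬ InL' n T) := by
    intro T hT
    obtain ⟨cs, ts, rfl⟩ := InL_struct hT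
    have hsw : InL n (PTree.node 0 (.node 1 ts :: cs)) := InL_pswap cs ts hT
    rw [pswap_node]
    refine ⟨hsw, by rw [pswap_node], ?_⟩
    rw [InL'_iff ts cs hsw, InL'_iff cs ts hT]
    obtain ⟨hnd, hmem, -, -⟩ := hT
    rw [labels_node] at hnd hmem
    have h2 : (2 : ℕ) ∈ labelsList cs ++ labelsList ts := by
      have := (hmem 2).mpr hn
      simp only [List.mem_cons] at this
      rcases this with h | h | h
      · omega
      · omega
      · exact h
    have hdisj : (labelsList cs).Disjoint (labelsList ts) := by
      simp only [List.nodup_cons] at hnd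
      exact List.disjoint_of_nodup_append hnd.2.2
    rw [List.mem_append] at h2
    constructor
    · intro hts hcs
      exact hdisj hcs hts
    · intro hcs
      rcases h2 with h | h
      · exact absurd h hcs
      · exact h
  have himg : pswap '' {T : PTree | InL' n T} =
      {T : PTree | InL n T} \ {T : PTree | InL' n T} := by
    ext T
    constructor
    · rintro ⟨S, hS, rfl⟩
      obtain ⟨h1, h2, h3⟩ := key S hS.1
      exact ⟨h1, fun h => (h3.mp h) hS⟩
    · rintro ⟨h1, h2⟩
      obtain ⟨k1, k2, k3⟩ := key T h1
      refine ⟨pswap T, ?_, k2⟩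
      obtain ⟨m1, m2, m3⟩ := key (pswap T) k1
      rw [k2] at m3
      by_contra hc
      exact h2 (m3.mpr hc)
  have hinj : Set.InjOn pswap {T : PTree | InL' n T} := by
    rintro T1 h1 T2 h2 hEq
    have k1 := (key T1 h1.1).2.1
    have k2 := (key T2 h2.1).2.1
    rw [← k1, ← k2, hEq]
  have hcnt : ({T : PTree | InL n T} \ {T : PTree | InL' n T}).ncard =
      {T : PTree | InL' n T}.ncard := by
    rw [← himg, Set.ncard_image_of_injOn hinj]
  have hsplit := Set.ncard_diff_add_ncard_of_subset hsub hfin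
  rw [hcnt] at hsplit
  constructor
  · omega
  · omega
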